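/- arXiv:1012.5505 — 2 statements merged into one kernel-verified Lean document; each statement's English description precedes it below -/
import Mathlib

section
/- Let n ≥ 3 and let E ∈ M_n(𝕋) be the matrix all of whose entries equal 0 ∈ ℝ. For every matrix A ∈ M_n(𝕋) that is not diagonal (i.e., has some off-diagonal entry different from −∞), the distance between A and E in the commuting graph Γ(M_n(𝕋)) is at most 2; indeed, if a is the maximum entry of A, then A — (A ⊕ a·I_n) — E is a path in Γ(M_n(𝕋)). -/
/-- The commuting graph of the semiring of `n × n` matrices over `R`: vertices are the
noncentral matrices, and two distinct vertices are adjacent iff they commute. -/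
def commGraph (R : Type*) [Semiring R] (n : ℕ) :
    SimpleGraph {X : Matrix (Fin n) (Fin n) R // ¬ ∀ Y, X * Y = Y * X} where
  Adj X Y := X ≠ Y ∧ X.1 * Y.1 = Y.1 * X.1
  symm := ⟨fun _ _ h => ⟨fun e => h.1 e.symm, h.2.symm⟩⟩
  loopless := ⟨fun _ h => h.1 rfl⟩


/-- The max-plus tropical semiring `ℝ ∪ {-∞}`, realized as the `Tropical` semiring on the
order dual of `WithBot ℝ`. -/
noncomputable instance : LinearOrderedAddCommMonoidWithTop ((WithBot ℝ)ᵒᵈ) :=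
  { (inferInstance : AddCommMonoid ((WithBot ℝ)ᵒᵈ)),
    (inferInstance : LinearOrder ((WithBot ℝ)ᵒᵈ)),
    (inferInstance : IsOrderedAddMonoid ((WithBot ℝ)ᵒᵈ)),
    (inferInstance : OrderTop ((WithBot ℝ)ᵒᵈ)) with
    top_add' := fun a => WithBot.bot_add a
    isAddLeftRegular_of_ne_top := fun _a ha _b _c h =>
      WithBot.add_left_cancel (α := ℝ) ha h }

abbrev Trop : Type := Tropical ((WithBot ℝ)ᵒᵈ)

private lemma trop_sum_le {S : Type*} (s : Finset S) (f : S → Trop) {i : S} (hi : i ∈ s) :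
    (∑ x ∈ s, f x) ≤ f i := by
  rw [← Tropical.untrop_le_iff, Finset.untrop_sum']
  exact Finset.inf_le hi

/-- For `n ≥ 3` and a nondiagonal matrix `A ∈ M_n(𝕋)`, the distance between `A` and the
all-ones matrix `E` in `Γ(M_n(𝕋))` is at most 2; indeed, with `a` the maximum entry of `A`
(the tropical sum of all entries), the consecutive terms of `A — (A ⊕ a·Iₙ) — E` commute. -/
theorem dist_le_two_of_nondiagonal (n : ℕ) (hn : 3 ≤ n)
    (A E : Matrix (Fin n) (Fin n) Trop) (hEdef : ∀ i j, E i j = 1)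
    (hnd : ∃ i j : Fin n, i ≠ j ∧ A i j ≠ 0)
    (hA : ¬ ∀ Y, A * Y = Y * A) (hE : ¬ ∀ Y, E * Y = Y * E) :
    (commGraph Trop n).edist ⟨A, hA⟩ ⟨E, hE⟩ ≤ 2 ∧
      A * (A + (∑ i, ∑ j, A i j) • (1 : Matrix (Fin n) (Fin n) Trop)) =
        (A + (∑ i, ∑ j, A i j) • (1 : Matrix (Fin n) (Fin n) Trop)) * A ∧
      (A + (∑ i, ∑ j, A i j) • (1 : Matrix (Fin n) (Fin n) Trop)) * E =
        E * (A + (∑ i, ∑ j, A i j) • (1 : Matrix (Fin n) (Fin n) Trop)) := by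
  obtain ⟨i0, j0, hij, hAij⟩ := hnd
  set a : Trop := ∑ i, ∑ j, A i j with ha
  set B : Matrix (Fin n) (Fin n) Trop := A + a • 1 with hB
  -- A and B commute
  have h1 : A * B = B * A := by
    rw [hB, Matrix.mul_add, Matrix.add_mul, Matrix.mul_smul, Matrix.smul_mul,
      Matrix.mul_one, Matrix.one_mul]
  -- absorption facts
  have hr : ∀ i, (∑ k, A i k) + a = a := by
    intro i
    rw [add_comm]
    exact Tropical.add_eq_left (trop_sum_le Finset.univ _ (Finset.mem_univ i))
  have hc : ∀ j, (∑ k, A k j) + a = a := by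
    intro j
    rw [add_comm, ha, ← Finset.sum_add_distrib]
    exact Finset.sum_congr rfl fun i _ =>
      Tropical.add_eq_left (trop_sum_le Finset.univ _ (Finset.mem_univ j))
  have hone_row : ∀ i : Fin n, (∑ k, (1 : Matrix (Fin n) (Fin n) Trop) i k) = 1 := by
    intro i; simp [Matrix.one_apply]
  have hone_col : ∀ j : Fin n, (∑ k, (1 : Matrix (Fin n) (Fin n) Trop) k j) = 1 := by
    intro j; simp [Matrix.one_apply]
  have hrowB : ∀ i, (∑ k, B i k) = a := by
    intro i
    simp only [hB, Matrix.add_apply, Matrix.smul_apply, smul_eq_mul,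
      Finset.sum_add_distrib, ← Finset.mul_sum, hone_row i, mul_one]
    exact hr i
  have hcolB : ∀ j, (∑ k, B k j) = a := by
    intro j
    simp only [hB, Matrix.add_apply, Matrix.smul_apply, smul_eq_mul,
      Finset.sum_add_distrib, ← Finset.mul_sum, hone_col j, mul_one]
    exact hc j
  -- B and E commute
  have h2 : B * E = E * B := by
    ext i j
    rw [Matrix.mul_apply, Matrix.mul_apply]
    simp only [hEdef, mul_one, one_mul]
    rw [hrowB i, hcolB j]
  -- B is not central
  have hBij : B i0 j0 = A i0 j0 := by
    simp [hB, Matrix.one_apply_ne hij]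
  have hBc : ¬ ∀ Y, B * Y = Y * B := by
    intro h
    have := congrFun (congrFun
      (h (Matrix.of fun p _ => if p = j0 then (1 : Trop) else 0)) i0) j0
    rw [Matrix.mul_apply, Matrix.mul_apply] at this
    simp only [Matrix.of_apply, mul_ite, ite_mul, mul_one, mul_zero, one_mul, zero_mul,
      Finset.sum_ite_eq', Finset.mem_univ, if_true, hij, if_false,
      Finset.sum_const_zero] at this
    rw [hBij] at this
    exact hAij this
  refine ⟨?_, h1, h2⟩
  by_cases hAE : A = E
  · have : (⟨A, hA⟩ : {X : Matrix (Fin n) (Fin n) Trop // ¬ ∀ Y, X * Y = Y * X}) = ⟨E, hE⟩ :=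
      Subtype.ext hAE
    rw [this, SimpleGraph.edist_self]
    exact zero_le
  · have hne : (⟨A, hA⟩ : {X : Matrix (Fin n) (Fin n) Trop // ¬ ∀ Y, X * Y = Y * X}) ≠ ⟨E, hE⟩ :=
      fun h => hAE (congrArg Subtype.val h)
    by_cases hBA : B = A
    · have adj : (commGraph Trop n).Adj ⟨A, hA⟩ ⟨E, hE⟩ := ⟨hne, by show A * E = E * A; rw [← hBA]; exact h2⟩
      calc (commGraph Trop n).edist ⟨A, hA⟩ ⟨E, hE⟩ ≤ adj.toWalk.length := adj.toWalk.edist_le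
        _ ≤ 2 := by simp [SimpleGraph.Walk.length_cons]
    · by_cases hBE : B = E
      · have adj : (commGraph Trop n).Adj ⟨A, hA⟩ ⟨E, hE⟩ := ⟨hne, by show A * E = E * A; rw [← hBE]; exact h1⟩
        calc (commGraph Trop n).edist ⟨A, hA⟩ ⟨E, hE⟩ ≤ adj.toWalk.length := adj.toWalk.edist_le
          _ ≤ 2 := by simp [SimpleGraph.Walk.length_cons]
      · have adj1 : (commGraph Trop n).Adj ⟨A, hA⟩ ⟨B, hBc⟩ :=
          ⟨fun h => hBA (congrArg Subtype.val h).symm, h1⟩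
        have adj2 : (commGraph Trop n).Adj ⟨B, hBc⟩ ⟨E, hE⟩ :=
          ⟨fun h => hBE (congrArg Subtype.val h), h2⟩
        refine le_trans (SimpleGraph.Walk.edist_le
          (SimpleGraph.Walk.cons adj1 adj2.toWalk)) ?_
        norm_num
end

section
/- Let n ≥ 3, let D ∈ M_n(𝕋) be a diagonal matrix whose diagonal entries are pairwise distinct, and let A ∈ M_n(𝕋) be any noncentral matrix. Then the distance between D and A in the commuting graph Γ(M_n(𝕋)) is at most 4. -/
/-! ### Auxiliary lemmas -/

noncomputable def uv (x : Trop) : WithBot ℝ := OrderDual.ofDual (Tropical.untrop x)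

lemma uv_eq_bot_iff (x : Trop) : uv x = ⊥ ↔ x = 0 :=
  ⟨fun h => Tropical.untrop_injective h, fun h => h ▸ rfl⟩

lemma uv_one : uv 1 = (0 : ℝ) := rfl

lemma tmul_eq_zero_iff (x y : Trop) : x * y = 0 ↔ x = 0 ∨ y = 0 := by
  rw [← uv_eq_bot_iff, ← uv_eq_bot_iff, ← uv_eq_bot_iff]
  exact WithBot.add_eq_bot

lemma tropSum_eq_zero_iff {ι : Type*} (s : Finset ι) (f : ι → Trop) :
    (∑ i ∈ s, f i) = 0 ↔ ∀ i ∈ s, f i = 0 := by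
  rw [← uv_eq_bot_iff]
  have h0 : uv (∑ i ∈ s, f i) = ⊥ ↔ Tropical.untrop (∑ i ∈ s, f i) = ⊤ := Iff.rfl
  rw [h0, Finset.untrop_sum', Finset.inf_eq_top_iff]
  refine forall₂_congr fun i _ => ?_
  simp only [Function.comp_apply]
  exact ⟨fun h => Tropical.untrop_injective (h.trans rfl), fun h => by rw [h]; rfl⟩

/-- absorb: if `uv x + uv y ≤ uv z` then `z + x*y = z`. -/
lemma absorb {x y z : Trop} (h : uv x + uv y ≤ uv z) : z + x * y = z :=
  Tropical.add_eq_left h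

lemma absorb0 {x z : Trop} : z + x * 0 = z := by rw [mul_zero, add_zero]

lemma tone_ne_zero : (1 : Trop) ≠ 0 := by
  intro h
  have : uv 1 = ⊥ := (uv_eq_bot_iff 1).mpr h
  rw [uv_one] at this
  exact (WithBot.coe_ne_bot) this

lemma tadd_eq_zero_iff {x y : Trop} : x + y = 0 ↔ x = 0 ∧ y = 0 := by
  constructor
  · intro h
    rcases le_total x y with h'|h'
    · have hx : x = 0 := by rwa [Tropical.add_eq_left h'] at h
      exact ⟨hx, le_antisymm (Tropical.le_zero _) (hx ▸ h')⟩
    · have hy : y = 0 := by rwa [Tropical.add_eq_right h'] at h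
      exact ⟨le_antisymm (Tropical.le_zero _) (hy ▸ h'), hy⟩
  · rintro ⟨hx, hy⟩; rw [hx, hy, add_zero]

variable {n : ℕ}

lemma mul_apply_ne_zero_iff (X Y : Matrix (Fin n) (Fin n) Trop) (i j : Fin n) :
    (X * Y) i j ≠ 0 ↔ ∃ c, X i c ≠ 0 ∧ Y c j ≠ 0 := by
  rw [Matrix.mul_apply, Ne, tropSum_eq_zero_iff]
  push_neg
  simp only [Ne, tmul_eq_zero_iff, not_or, Finset.mem_univ, true_and]

lemma one_add_apply_eq (A : Matrix (Fin n) (Fin n) Trop) (i j : Fin n) (h : i ≠ j) :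
    (1 + A) i j = A i j := by
  rw [Matrix.add_apply, Matrix.one_apply_ne h, zero_add]

lemma one_add_diag_ne_zero (A : Matrix (Fin n) (Fin n) Trop) (i : Fin n) :
    (1 + A) i i ≠ 0 := by
  rw [Matrix.add_apply, Matrix.one_apply_eq]
  intro h
  exact tone_ne_zero (tadd_eq_zero_iff.mp h).1

lemma diag_pow_ne_zero (A : Matrix (Fin n) (Fin n) Trop) (m : ℕ) (i : Fin n) :
    ((1 + A) ^ m) i i ≠ 0 := by
  induction m with
  | zero => simpa using tone_ne_zero
  | succ m ih =>
    rw [pow_succ]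
    exact (mul_apply_ne_zero_iff _ _ i i).mpr ⟨i, ih, one_add_diag_ne_zero A i⟩

lemma supp_congr_mul_right {X Y Z : Matrix (Fin n) (Fin n) Trop}
    (h : ∀ i j, X i j ≠ 0 ↔ Y i j ≠ 0) (i j : Fin n) :
    (X * Z) i j ≠ 0 ↔ (Y * Z) i j ≠ 0 := by
  rw [mul_apply_ne_zero_iff, mul_apply_ne_zero_iff]
  exact exists_congr fun c => and_congr_left fun _ => h i c

/-- There is a power `Q = (1+A)^k`, `k ≥ 1`, whose support is stable under further
multiplication by powers of `1+A`. -/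
lemma exists_good_power (A : Matrix (Fin n) (Fin n) Trop) :
    ∃ k : ℕ, 1 ≤ k ∧ ∀ t i j, (((1 + A) ^ (k + t)) i j ≠ 0 ↔ ((1 + A) ^ k) i j ≠ 0) := by
  classical
  set g : ℕ → Finset (Fin n × Fin n) :=
    fun m => Finset.univ.filter (fun ij => ((1 + A) ^ (m + 1)) ij.1 ij.2 ≠ 0) with hg
  have hmono : ∀ m, g m ⊆ g (m + 1) := by
    intro m ij hij
    simp only [hg, Finset.mem_filter, Finset.mem_univ, true_and] at hij ⊢
    rw [pow_succ]
    exact (mul_apply_ne_zero_iff _ _ _ _).mpr ⟨ij.2, hij, one_add_diag_ne_zero A ij.2⟩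
  have hstabm : ∃ m, g m = g (m + 1) := by
    by_contra hc
    push_neg at hc
    have hsm : StrictMono fun m => (g m).card := by
      apply strictMono_nat_of_lt_succ
      intro m
      exact Finset.card_lt_card (Finset.ssubset_iff_subset_ne.mpr ⟨hmono m, hc m⟩)
    have h1 : n * n + 1 ≤ (g (n * n + 1)).card := by
      simpa using hsm.le_apply (x := n * n + 1)
    have h2 : (g (n * n + 1)).card ≤ n * n := by
      calc (g (n * n + 1)).card ≤ (Finset.univ : Finset (Fin n × Fin n)).card :=
            Finset.card_le_card (Finset.filter_subset _ _)
        _ = n * n := by simp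
    omega
  obtain ⟨m, hm⟩ := hstabm
  refine ⟨m + 1, by omega, ?_⟩
  have key : ∀ t i j, (((1 + A) ^ (m + 1 + t)) i j ≠ 0 ↔ ((1 + A) ^ (m + 1)) i j ≠ 0) := by
    intro t
    induction t with
    | zero => intro i j; rfl
    | succ t ih =>
      intro i j
      have e1 : (1 + A) ^ (m + 1 + (t + 1)) = (1 + A) ^ (m + 1 + t) * (1 + A) := by
        rw [← pow_succ, ← add_assoc]
      have e2 : (1 + A) ^ (m + 2) = (1 + A) ^ (m + 1) * (1 + A) := by rw [← pow_succ]
      rw [e1]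
      rw [supp_congr_mul_right ih i j, ← e2]
      -- now : (1+A)^(m+2) i j ≠ 0 ↔ (1+A)^(m+1) i j ≠ 0
      have := Finset.ext_iff.mp hm (i, j)
      simp only [hg, Finset.mem_filter, Finset.mem_univ, true_and] at this
      exact (this.symm)
  exact key

/-- The combinatorial lemma: any transitive relation on a finite type with at least two
elements admits a pair `p ≠ q` as needed. -/
lemma comb_lemma {V : Type*} [Fintype V] (x₀ y₀ : V) (hxy : x₀ ≠ y₀)
    (R : V → V → Prop) (htrans : ∀ {a b c}, R a b → R b c → R a c) :
    ∃ p q, p ≠ q ∧ (∀ i, i ≠ p → i ≠ q → R i p → R i q) ∧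
      (∀ j, j ≠ p → j ≠ q → R q j → R p j) := by
  by_cases hcyc : ∃ u v, u ≠ v ∧ R u v ∧ R v u
  · obtain ⟨u, v, huv, h1, h2⟩ := hcyc
    exact ⟨u, v, huv, fun i _ _ hip => htrans hip h1, fun j _ _ hqj => htrans h1 hqj⟩
  · push_neg at hcyc
    set R' : V → V → Prop := fun a b => R a b ∧ a ≠ b with hR'
    have htrans' : ∀ {a b c}, R' a b → R' b c → R' a c := by
      rintro a b c ⟨hab, hab'⟩ ⟨hbc, hbc'⟩
      refine ⟨htrans hab hbc, ?_⟩
      rintro rfl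
      exact hcyc a b hab' hab hbc
    letI : IsTrans V R' := ⟨fun _ _ _ h h' => htrans' h h'⟩
    letI : IsIrrefl V R' := ⟨fun a h => h.2 rfl⟩
    obtain ⟨p, -, hpmin⟩ := (Finite.wellFounded_of_trans_of_irrefl R').has_min
      Set.univ ⟨x₀, trivial⟩
    letI : IsTrans V (flip R') := ⟨fun _ _ _ h h' => htrans' h' h⟩
    letI : IsIrrefl V (flip R') := ⟨fun a h => h.2 rfl⟩
    have hne : ({x | x ≠ p} : Set V).Nonempty := by
      rcases eq_or_ne x₀ p with rfl | h
      · exact ⟨y₀, fun h => hxy h.symm⟩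
      · exact ⟨x₀, h⟩
    obtain ⟨q, hq, hqmax⟩ := (Finite.wellFounded_of_trans_of_irrefl (flip R')).has_min
      {x | x ≠ p} hne
    refine ⟨p, q, fun h => hq h.symm, ?_, ?_⟩
    · intro i hip _ hRip
      exact absurd ⟨hRip, hip⟩ (hpmin i trivial)
    · intro j hjp hjq hRqj
      exact absurd (⟨hRqj, fun h => hjq h.symm⟩ : R' q j) (hqmax j hjp)

/-- For `n ≥ 3`, if `D ∈ M_n(𝕋)` is a diagonal matrix with pairwise distinct diagonal
entries and `A ∈ M_n(𝕋)` is any noncentral matrix, then the distance between `D` and `A`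
in `Γ(M_n(𝕋))` is at most 4. -/
theorem dist_le_four_of_distinct_diagonal (n : ℕ) (hn : 3 ≤ n)
    (D A : Matrix (Fin n) (Fin n) Trop)
    (hdiag : ∀ i j : Fin n, i ≠ j → D i j = 0)
    (hdist : Function.Injective fun i : Fin n => D i i)
    (hD : ¬ ∀ Y, D * Y = Y * D) (hA : ¬ ∀ Y, A * Y = Y * A) :
    (commGraph Trop n).edist ⟨D, hD⟩ ⟨A, hA⟩ ≤ 4 := by
  classical
  haveI : NeZero n := ⟨by omega⟩
  have hDdiag : D = Matrix.diagonal (fun i => D i i) := by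
    ext i j
    rcases eq_or_ne i j with rfl | h
    · rw [Matrix.diagonal_apply_eq]
    · rw [Matrix.diagonal_apply_ne _ h]; exact hdiag i j h
  by_cases hAd : ∀ i j : Fin n, i ≠ j → A i j = 0
  · -- A is diagonal : distance ≤ 1
    have hAdiag : A = Matrix.diagonal (fun i => A i i) := by
      ext i j
      rcases eq_or_ne i j with rfl | h
      · rw [Matrix.diagonal_apply_eq]
      · rw [Matrix.diagonal_apply_ne _ h]; exact hAd i j h
    rcases eq_or_ne D A with h | h
    · have he : (⟨D, hD⟩ : {X : Matrix (Fin n) (Fin n) Trop // ¬ ∀ Y, X * Y = Y * X})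
          = ⟨A, hA⟩ := Subtype.ext h
      rw [he, SimpleGraph.edist_self]
      exact zero_le
    · have hadj : (commGraph Trop n).Adj ⟨D, hD⟩ ⟨A, hA⟩ := by
        refine ⟨fun hh => h (congrArg Subtype.val hh), ?_⟩
        show D * A = A * D
        rw [hDdiag, hAdiag, Matrix.diagonal_mul_diagonal, Matrix.diagonal_mul_diagonal]
        exact congrArg Matrix.diagonal (funext fun i => mul_comm (D i i) (A i i))
      refine le_trans (SimpleGraph.edist_le (SimpleGraph.Walk.cons hadj SimpleGraph.Walk.nil)) ?_
      simp
  · push_neg at hAd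
    obtain ⟨u, v, huv, hAuv⟩ := hAd
    obtain ⟨k, hk1, hstab⟩ := exists_good_power A
    set Q : Matrix (Fin n) (Fin n) Trop := (1 + A) ^ k with hQdef
    have htransR : ∀ {i j l : Fin n}, Q i j ≠ 0 → Q j l ≠ 0 → Q i l ≠ 0 := by
      intro i j l hij hjl
      have h2 : (Q * Q) i l ≠ 0 := (mul_apply_ne_zero_iff Q Q i l).mpr ⟨j, hij, hjl⟩
      rw [hQdef, ← pow_add] at h2
      exact (hstab k i l).mp h2
    obtain ⟨p, q, hpq, hcol, hrow⟩ := comb_lemma u v huv (fun i j => Q i j ≠ 0)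
      (fun h h' => htransR h h')
    -- a third index
    obtain ⟨r, hrp, hrq⟩ : ∃ r : Fin n, r ≠ p ∧ r ≠ q := by
      by_contra hc
      push_neg at hc
      have hsub : (Finset.univ : Finset (Fin n)) ⊆ {p, q} := by
        intro x _
        rcases eq_or_ne x p with rfl | hxp
        · exact Finset.mem_insert_self _ _
        · rw [hc x hxp]; exact Finset.mem_insert_of_mem (Finset.mem_singleton_self _)
      have := Finset.card_le_card hsub
      simp only [Finset.card_univ, Fintype.card_fin] at this
      have h2 : ({p, q} : Finset (Fin n)).card ≤ 2 :=
        le_trans (Finset.card_insert_le _ _) (by simp)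
      omega
    -- quantitative bounds
    have hneU : (Finset.univ : Finset (Fin n × Fin n)).Nonempty := Finset.univ_nonempty
    set f : Fin n × Fin n → ℝ :=
      fun ij => max |(uv (Q ij.1 ij.2)).unbotD 0| |(uv (A ij.1 ij.2)).unbotD 0| with hf
    set K : ℝ := Finset.univ.sup' hneU f with hK
    have hK0 : 0 ≤ K :=
      le_trans (le_trans (abs_nonneg _) (le_max_left _ _))
        (Finset.le_sup' f (Finset.mem_univ (p, p)))
    have hQval : ∀ i j, Q i j ≠ 0 → ∃ x : ℝ, uv (Q i j) = (x : WithBot ℝ) ∧ |x| ≤ K := by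
      intro i j h
      have hb : uv (Q i j) ≠ ⊥ := fun hb => h ((uv_eq_bot_iff _).mp hb)
      obtain ⟨x, hx⟩ := WithBot.ne_bot_iff_exists.mp hb
      refine ⟨x, hx.symm, ?_⟩
      calc |x| = |(uv (Q i j)).unbotD 0| := by rw [← hx]; simp
        _ ≤ f (i, j) := le_max_left _ _
        _ ≤ K := Finset.le_sup' f (Finset.mem_univ _)
    have hAval : ∀ i j, A i j ≠ 0 → ∃ x : ℝ, uv (A i j) = (x : WithBot ℝ) ∧ |x| ≤ K := by
      intro i j h
      have hb : uv (A i j) ≠ ⊥ := fun hb => h ((uv_eq_bot_iff _).mp hb)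
      obtain ⟨x, hx⟩ := WithBot.ne_bot_iff_exists.mp hb
      refine ⟨x, hx.symm, ?_⟩
      calc |x| = |(uv (A i j)).unbotD 0| := by rw [← hx]; simp
        _ ≤ f (i, j) := le_max_right _ _
        _ ≤ K := Finset.le_sup' f (Finset.mem_univ _)
    have hQle : ∀ i j, uv (Q i j) ≤ ((K : ℝ) : WithBot ℝ) := by
      intro i j
      by_cases h : Q i j = 0
      · rw [(uv_eq_bot_iff _).mpr h]; exact bot_le
      · obtain ⟨x, hx, hxK⟩ := hQval i j h
        rw [hx]
        exact_mod_cast (abs_le.mp hxK).2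
    -- the scalars
    set α : ℝ := K + 1 with hα
    set s₀ : ℝ := -(2 * K + 2) with hs₀
    set aa : Trop := Tropical.trop (OrderDual.toDual ((α : ℝ) : WithBot ℝ)) with haa
    set ss : Trop := Tropical.trop (OrderDual.toDual ((s₀ : ℝ) : WithBot ℝ)) with hss
    have huvaa : uv aa = ((α : ℝ) : WithBot ℝ) := rfl
    have huvss : uv ss = ((s₀ : ℝ) : WithBot ℝ) := rfl
    have hss0 : ss ≠ 0 := by
      intro h
      have h2 := (uv_eq_bot_iff ss).mpr h
      rw [huvss] at h2
      exact WithBot.coe_ne_bot h2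
    -- the matrices
    set Dα : Matrix (Fin n) (Fin n) Trop := Matrix.diagonal (fun _ => aa) with hDα
    set B : Matrix (Fin n) (Fin n) Trop := Dα + Q with hB
    set S : Matrix (Fin n) (Fin n) Trop := Matrix.single p q ss with hS
    set M : Matrix (Fin n) (Fin n) Trop := 1 + S with hM
    set w1 : Trop := Tropical.trop (OrderDual.toDual ((1 : ℝ) : WithBot ℝ)) with hw1
    set cdiag : Fin n → Trop := fun i => if i = p ∨ i = q then 1 else w1 with hcdiag
    set C : Matrix (Fin n) (Fin n) Trop := Matrix.diagonal cdiag with hC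
    have huvw1 : uv w1 = ((1 : ℝ) : WithBot ℝ) := rfl
    have hw1ne : w1 ≠ 1 := by
      intro h
      have h2 : uv w1 = uv 1 := congrArg uv h
      rw [uv_one, huvw1, WithBot.coe_eq_coe] at h2
      norm_num at h2
    have hcp : cdiag p = 1 := if_pos (Or.inl rfl)
    have hcq : cdiag q = 1 := if_pos (Or.inr rfl)
    have hcr : cdiag r = w1 := if_neg (by rintro (h | h); exacts [hrp h, hrq h])
    -- entries of B
    have hBdiag : ∀ i, B i i = aa := by
      intro i
      rw [hB, Matrix.add_apply, hDα, Matrix.diagonal_apply_eq]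
      have hle : uv (Q i i) ≤ uv aa := by
        rw [huvaa]
        exact le_trans (hQle i i) (WithBot.coe_le_coe.mpr (by rw [hα]; linarith))
      exact Tropical.add_eq_left hle
    have hBoff : ∀ i j, i ≠ j → B i j = Q i j := by
      intro i j h
      rw [hB, Matrix.add_apply, hDα, Matrix.diagonal_apply_ne _ h, zero_add]
    have hMpq : M p q = ss := by
      rw [hM, Matrix.add_apply, Matrix.one_apply_ne hpq, zero_add, hS,
        Matrix.single_apply_same]
    have hMpp : M p p = 1 := by
      rw [hM, Matrix.add_apply, Matrix.one_apply_eq, hS,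
        Matrix.single_apply_of_ne _ _ _ _ _ (show ¬(p = p ∧ q = p) from fun h => hpq h.2.symm), add_zero]
    -- Edge D - C
    have hDCcomm : D * C = C * D := by
      rw [hDdiag, hC, Matrix.diagonal_mul_diagonal, Matrix.diagonal_mul_diagonal]
      exact congrArg Matrix.diagonal (funext fun i => mul_comm (D i i) (cdiag i))
    have hDCne : D ≠ C := by
      intro h
      have h1 : D p p = 1 := by rw [h, hC, Matrix.diagonal_apply_eq, hcp]
      have h2 : D q q = 1 := by rw [h, hC, Matrix.diagonal_apply_eq, hcq]
      exact hpq (hdist (h1.trans h2.symm))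
    have hCnc : ¬ ∀ Y, C * Y = Y * C := by
      intro h
      have h2 := congrFun (congrFun (h (Matrix.single p r (1 : Trop))) p) r
      rw [hC, Matrix.diagonal_mul, Matrix.mul_diagonal, Matrix.single_apply_same,
        hcp, hcr, one_mul, one_mul] at h2
      exact hw1ne h2.symm
    -- Edge C - M
    have hCMcomm : C * M = M * C := by
      ext i j
      rw [hC, Matrix.diagonal_mul, Matrix.mul_diagonal]
      rcases eq_or_ne i j with rfl | hij
      · exact mul_comm _ _
      · have hMij : M i j = S i j := by
          rw [hM, Matrix.add_apply, Matrix.one_apply_ne hij, zero_add]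
        by_cases hpqc : i = p ∧ j = q
        · obtain ⟨rfl, rfl⟩ := hpqc
          rw [hcp, hcq, one_mul, mul_one]
        · have hSij : S i j = 0 := by
            rw [hS]; exact Matrix.single_apply_of_ne _ _ _ _ _
              (show ¬(p = i ∧ q = j) from fun hh => hpqc ⟨hh.1.symm, hh.2.symm⟩)
          rw [hMij, hSij, mul_zero, zero_mul]
    have hCMne : C ≠ M := by
      intro h
      have h2 := congrFun (congrFun h p) q
      rw [hC, Matrix.diagonal_apply_ne _ hpq, hMpq] at h2
      exact hss0 h2.symm
    have hMnc : ¬ ∀ Y, M * Y = Y * M := by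
      intro h
      have h2 := congrFun (congrFun (h (Matrix.single q p (1 : Trop))) p) p
      have e1 : M * Matrix.single q p (1 : Trop)
          = Matrix.single q p (1 : Trop) + S * Matrix.single q p (1 : Trop) := by
        rw [hM, add_mul, one_mul]
      have e2 : Matrix.single q p (1 : Trop) * M
          = Matrix.single q p (1 : Trop) + Matrix.single q p (1 : Trop) * S := by
        rw [hM, mul_add, mul_one]
      rw [e1, e2, Matrix.add_apply, Matrix.add_apply] at h2
      have hEpp : Matrix.single q p (1 : Trop) p p = 0 :=
        Matrix.single_apply_of_ne _ _ _ _ _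
          (show ¬(q = p ∧ p = p) from fun hh => hpq hh.1.symm)
      have hSE : (S * Matrix.single q p (1 : Trop)) p p = ss := by
        rw [hS, Matrix.single_mul_apply_same,
          Matrix.single_apply_same, mul_one]
      have hES : (Matrix.single q p (1 : Trop) * S) p p = 0 := by
        rw [hS, Matrix.mul_single_apply_of_ne _ _ _ _ _ hpq]
      rw [hEpp, hSE, hES, zero_add, zero_add] at h2
      exact hss0 h2
    -- Edge M - B : the main computation
    have hMBcomm : M * B = B * M := by
      have e1 : M * B = B + S * B := by rw [hM, add_mul, one_mul]
      have e2 : B * M = B + B * S := by rw [hM, mul_add, mul_one]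
      rw [e1, e2]
      ext i j
      rw [Matrix.add_apply, Matrix.add_apply, hS]
      by_cases hip : i = p
      · rw [hip, Matrix.single_mul_apply_same]
        by_cases hjq : j = q
        · rw [hjq, Matrix.mul_single_apply_same, hBdiag q, hBdiag p,
            mul_comm ss aa]
        · rw [Matrix.mul_single_apply_of_ne _ _ _ _ _ hjq, add_zero]
          by_cases hjp : j = p
          · rw [hjp, hBdiag p, hBoff q p (Ne.symm hpq)]
            by_cases hz : Q q p = 0
            · rw [hz, mul_zero, add_zero]
            · obtain ⟨x1, hx1, hb1⟩ := hQval q p hz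
              refine absorb ?_
              rw [huvss, hx1, huvaa, ← WithBot.coe_add, WithBot.coe_le_coe]
              have h1 := abs_le.mp hb1
              rw [hs₀, hα]; linarith [h1.1, h1.2]
          · rw [hBoff p j (fun hh => hjp hh.symm), hBoff q j (fun hh => hjq hh.symm)]
            by_cases hz : Q q j = 0
            · rw [hz, mul_zero, add_zero]
            · have hz2 : Q p j ≠ 0 := hrow j hjp hjq hz
              obtain ⟨x1, hx1, hb1⟩ := hQval q j hz
              obtain ⟨x2, hx2, hb2⟩ := hQval p j hz2
              refine absorb ?_
              rw [huvss, hx1, hx2, ← WithBot.coe_add, WithBot.coe_le_coe]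
              have h1 := abs_le.mp hb1
              have h2 := abs_le.mp hb2
              rw [hs₀]; linarith [h1.1, h1.2, h2.1, h2.2]
      · rw [Matrix.single_mul_apply_of_ne _ _ _ _ _ hip, add_zero]
        by_cases hjq : j = q
        · rw [hjq, Matrix.mul_single_apply_same]
          by_cases hiq : i = q
          · rw [hiq, hBdiag q, hBoff q p (Ne.symm hpq)]
            by_cases hz : Q q p = 0
            · rw [hz, zero_mul, add_zero]
            · obtain ⟨x1, hx1, hb1⟩ := hQval q p hz
              refine (absorb ?_).symm
              rw [huvss, hx1, huvaa]
              rw [← WithBot.coe_add, WithBot.coe_le_coe]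
              have h1 := abs_le.mp hb1
              rw [hs₀, hα]; linarith [h1.1, h1.2]
          · rw [hBoff i q hiq, hBoff i p hip]
            by_cases hz : Q i p = 0
            · rw [hz, zero_mul, add_zero]
            · have hz2 : Q i q ≠ 0 := hcol i hip hiq hz
              obtain ⟨x1, hx1, hb1⟩ := hQval i p hz
              obtain ⟨x2, hx2, hb2⟩ := hQval i q hz2
              refine (absorb ?_).symm
              rw [hx1, huvss, hx2, ← WithBot.coe_add, WithBot.coe_le_coe]
              have h1 := abs_le.mp hb1
              have h2 := abs_le.mp hb2
              rw [hs₀]; linarith [h1.1, h1.2, h2.1, h2.2]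
        · rw [Matrix.mul_single_apply_of_ne _ _ _ _ _ hjq, add_zero]
    have hMBne : M ≠ B := by
      intro h
      have h2 : (1 : Trop) = aa := by rw [← hMpp, h, hBdiag p]
      have h3 : uv (1 : Trop) = uv aa := congrArg uv h2
      rw [uv_one, huvaa, WithBot.coe_eq_coe] at h3
      rw [hα] at h3; linarith
    have hBnc : ¬ ∀ Y, B * Y = Y * B := by
      intro h
      have hQuv : Q u v ≠ 0 := by
        have h1 : (1 + A) u v ≠ 0 := by
          rw [one_add_apply_eq A u v huv]; exact hAuv
        obtain ⟨k', rfl⟩ : ∃ k', k = k' + 1 := ⟨k - 1, by omega⟩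
        rw [hQdef, pow_succ]
        exact (mul_apply_ne_zero_iff _ _ u v).mpr ⟨u, diag_pow_ne_zero A k' u, h1⟩
      have hBuv : B u v ≠ 0 := by rw [hBoff u v huv]; exact hQuv
      have h2 := congrFun (congrFun (h (Matrix.single v v (1 : Trop))) u) v
      rw [Matrix.mul_single_apply_same,
        Matrix.single_mul_apply_of_ne _ _ _ _ _ huv, mul_one] at h2
      exact hBuv h2
    have hBAcomm : B * A = A * B := by
      have hDαA : Dα * A = A * Dα := by
        ext i j
        rw [hDα, Matrix.diagonal_mul, Matrix.mul_diagonal]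
        exact mul_comm _ _
      have hQA : Q * A = A * Q := by
        have hcomm : Commute A ((1 + A) ^ k) :=
          (((Commute.one_right A).add_right (Commute.refl A)).pow_right k)
        rw [hQdef]
        exact hcomm.symm
      rw [hB, add_mul, mul_add, hDαA, hQA]
    have hBAne : B ≠ A := by
      intro h
      have h2 : A p p = aa := by rw [← h, hBdiag p]
      have h3 : A p p ≠ 0 := by
        rw [h2]; intro hh
        have := (uv_eq_bot_iff aa).mpr hh
        rw [huvaa] at this
        exact WithBot.coe_ne_bot this
      obtain ⟨x, hx, hxK⟩ := hAval p p h3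
      rw [h2, huvaa, WithBot.coe_eq_coe] at hx
      have := abs_le.mp hxK
      rw [hα] at hx; linarith [this.2]
    -- assemble the walk D - C - M - B - A
    have hadjDC : (commGraph Trop n).Adj ⟨D, hD⟩ ⟨C, hCnc⟩ :=
      ⟨fun hh => hDCne (congrArg Subtype.val hh), hDCcomm⟩
    have hadjCM : (commGraph Trop n).Adj ⟨C, hCnc⟩ ⟨M, hMnc⟩ :=
      ⟨fun hh => hCMne (congrArg Subtype.val hh), hCMcomm⟩
    have hadjMB : (commGraph Trop n).Adj ⟨M, hMnc⟩ ⟨B, hBnc⟩ :=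
      ⟨fun hh => hMBne (congrArg Subtype.val hh), hMBcomm⟩
    have hadjBA : (commGraph Trop n).Adj ⟨B, hBnc⟩ ⟨A, hA⟩ :=
      ⟨fun hh => hBAne (congrArg Subtype.val hh), hBAcomm⟩
    refine le_trans (SimpleGraph.edist_le (SimpleGraph.Walk.cons hadjDC
      (SimpleGraph.Walk.cons hadjCM (SimpleGraph.Walk.cons hadjMB
        (SimpleGraph.Walk.cons hadjBA SimpleGraph.Walk.nil))))) ?_
    simp
end
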